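/- Cancellation law for Minkowski sums of polytopes: if P₁, P₂, Q are polytopes in ℝⁿ with P₁ + Q = P₂ + Q (Minkowski sum), then P₁ = P₂. -/

import Mathlib

open Pointwise Filter

/-- Rådström cancellation: one-sided version. -/
theorem radstrom_subset {E : Type*} [NormedAddCommGroup E] [NormedSpace ℝ E]
    {A B C : Set E} (hB : Convex ℝ B) (hBc : IsClosed B)
    (hC : Bornology.IsBounded C) (hCne : C.Nonempty)
    (h : A + C ⊆ B + C) : A ⊆ B := by
  obtain ⟨M, hM⟩ := hC.exists_norm_le
  intro a ha
  obtain ⟨c₀, hc₀⟩ := hCne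
  have key : ∀ c ∈ C, ∃ b c', b ∈ B ∧ c' ∈ C ∧ a + c = b + c' := by
    intro c hc
    have : a + c ∈ B + C := h (Set.add_mem_add ha hc)
    obtain ⟨b, hb, c', hc', hbc⟩ := this
    exact ⟨b, c', hb, hc', hbc.symm⟩
  choose! fb fc hfb hfc hfeq using key
  -- sequence of elements of C
  let c : ℕ → E := fun n => Nat.rec c₀ (fun _ x => fc x) n
  have hcC : ∀ n, c n ∈ C := by
    intro n
    induction n with
    | zero => exact hc₀
    | succ k ih => exact hfc _ ih
  have hstep : ∀ n, c (n + 1) = fc (c n) := fun n => rfl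
  have hsum : ∀ n : ℕ, (∑ i ∈ Finset.range n, fb (c i)) = n • a + c 0 - c n := by
    intro n
    induction n with
    | zero => simp
    | succ k ih =>
        rw [Finset.sum_range_succ, ih]
        have := hfeq (c k) (hcC k)
        rw [hstep k]
        have hfb' : fb (c k) = a + c k - fc (c k) := by
          rw [this]; abel
        rw [hfb', succ_nsmul]
        abel
  -- averages
  set x : ℕ → E := fun n => (1 / ((n : ℝ) + 1)) • ∑ i ∈ Finset.range (n + 1), fb (c i) with hx
  have hxB : ∀ n, x n ∈ B := by
    intro n
    have := hB.sum_mem (t := Finset.range (n + 1))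
      (w := fun _ => 1 / ((n : ℝ) + 1)) (z := fun i => fb (c i))
      (fun i _ => by positivity)
      (by
        rw [Finset.sum_const, Finset.card_range, nsmul_eq_mul]
        field_simp
        norm_num)
      (fun i _ => hfb _ (hcC i))
    simpa [hx, Finset.smul_sum] using this
  have hdiff : ∀ n : ℕ, a - x n = (1 / ((n : ℝ) + 1)) • (c (n + 1) - c 0) := by
    intro n
    rw [hx]
    simp only
    rw [hsum (n + 1)]
    have hne : ((n : ℝ) + 1) ≠ 0 := by positivity
    have : a = (1 / ((n : ℝ) + 1)) • (((n + 1 : ℕ) : ℝ) • a) := by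
      rw [smul_smul]
      push_cast
      rw [one_div_mul_cancel hne, one_smul]
    calc a - (1 / ((n : ℝ) + 1)) • ((n + 1) • a + c 0 - c (n + 1))
        = (1 / ((n : ℝ) + 1)) • (((n + 1 : ℕ) : ℝ) • a)
          - (1 / ((n : ℝ) + 1)) • ((n + 1) • a + c 0 - c (n + 1)) := by rw [← this]
      _ = (1 / ((n : ℝ) + 1)) • (c (n + 1) - c 0) := by
          rw [← smul_sub]
          congr 1
          rw [← Nat.cast_smul_eq_nsmul ℝ (n + 1) a]
          abel
  have htend : Tendsto x atTop (nhds a) := by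
    rw [tendsto_iff_norm_sub_tendsto_zero]
    have hb : ∀ n : ℕ, ‖x n - a‖ ≤ (2 * M) / ((n : ℝ) + 1) := by
      intro n
      have hcb : ‖c (n + 1) - c 0‖ ≤ 2 * M :=
        calc ‖c (n + 1) - c 0‖ ≤ ‖c (n + 1)‖ + ‖c 0‖ := norm_sub_le _ _
          _ ≤ M + M := add_le_add (hM _ (hcC (n+1))) (hM _ (hcC 0))
          _ = 2 * M := by ring
      calc ‖x n - a‖ = ‖a - x n‖ := by rw [norm_sub_rev]
        _ = (1 / ((n : ℝ) + 1)) * ‖c (n + 1) - c 0‖ := by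
            rw [hdiff n, norm_smul, norm_div, norm_one, Real.norm_eq_abs,
              abs_of_pos (by positivity : (0:ℝ) < (n : ℝ) + 1)]
        _ ≤ (1 / ((n : ℝ) + 1)) * (2 * M) := by
            apply mul_le_mul_of_nonneg_left hcb (by positivity)
        _ = (2 * M) / ((n : ℝ) + 1) := by ring
    have h0 : Tendsto (fun n : ℕ => (2 * M) / ((n : ℝ) + 1)) atTop (nhds 0) :=
      tendsto_const_nhds.div_atTop (tendsto_atTop_add_const_right _ 1 tendsto_natCast_atTop_atTop)
    exact squeeze_zero (fun n => norm_nonneg _) hb h0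
  exact hBc.mem_of_tendsto htend (Filter.Eventually.of_forall hxB)

/-- Cancellation law for Minkowski sums of polytopes. -/
theorem polytope_minkowski_cancel (n : ℕ) (S₁ S₂ S₃ : Set (Fin n → ℝ))
    (h₁ : S₁.Finite) (h₂ : S₂.Finite) (h₃ : S₃.Finite)
    (hn₁ : S₁.Nonempty) (hn₂ : S₂.Nonempty) (hn₃ : S₃.Nonempty)
    (P₁ P₂ Q : Set (Fin n → ℝ))
    (hP₁ : P₁ = convexHull ℝ S₁) (hP₂ : P₂ = convexHull ℝ S₂) (hQ : Q = convexHull ℝ S₃)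
    (h : P₁ + Q = P₂ + Q) :
    P₁ = P₂ := by
  subst hP₁ hP₂ hQ
  have hQb : Bornology.IsBounded (convexHull ℝ S₃) := (h₃.isCompact_convexHull ℝ).isBounded
  have hQne : (convexHull ℝ S₃).Nonempty := hn₃.convexHull
  apply Set.Subset.antisymm
  · exact radstrom_subset (convex_convexHull ℝ S₂) (h₂.isCompact_convexHull ℝ).isClosed hQb hQne h.le
  · exact radstrom_subset (convex_convexHull ℝ S₁) (h₁.isCompact_convexHull ℝ).isClosed hQb hQne h.ge
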